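/- In the braid group B_q, for 2 ≤ r < q, the element (Π_{r-1})^{-r} · (Π_{q-1})^p equals the positive word Π_{q-1}^r · Π_{q-2}^{r-1} ⋯ Π_{q-r+1}^2 · Π_{q-r} · (Π_{q-1})^{p-r} for any integer p ≥ r. Consequently the twisted torus knot braid (Π_{r-1})^{-r} (Π_{q-1})^p is a positive braid when p ≥ r. -/

import Mathlib

/-- Defining relations for the braid group `B n` on `n` strands, with Artin
generators `σ_1, …, σ_{n-1}`.  Generators with index `0` or `≥ n` are killed,
so the presented group is exactly `B n`. -/
def braidRels (n : ℕ) : Set (FreeGroup ℕ) :=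
  {r | (∃ i, 1 ≤ i ∧ i + 2 ≤ n ∧
        r = FreeGroup.of i * FreeGroup.of (i + 1) * FreeGroup.of i *
            (FreeGroup.of (i + 1) * FreeGroup.of i * FreeGroup.of (i + 1))⁻¹) ∨
      (∃ i j, 1 ≤ i ∧ i + 2 ≤ j ∧ j + 1 ≤ n ∧
        r = FreeGroup.of i * FreeGroup.of j * (FreeGroup.of j * FreeGroup.of i)⁻¹) ∨
      (∃ i, (i = 0 ∨ n ≤ i) ∧ r = FreeGroup.of i)}

/-- The braid group on `n` strands. -/
def BraidGroup (n : ℕ) : Type := PresentedGroup (braidRels n)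

instance (n : ℕ) : Group (BraidGroup n) := by unfold BraidGroup; infer_instance

/-- The Artin generator `σ_i` of `B n`. -/
def sigma (n i : ℕ) : BraidGroup n := PresentedGroup.of i

/-- `Π_s^l = σ_l σ_{l+1} ⋯ σ_s`  (the identity when `s < l`). -/
def Pi' (n l s : ℕ) : BraidGroup n := ((List.range' l (s + 1 - l)).map (sigma n)).prod

/-- `Δ_s^l = Π_s^l Π_{s-1}^l ⋯ Π_l^l`  (the identity when `s < l`). -/
def Delta (n l s : ℕ) : BraidGroup n :=
  ((List.range (s + 1 - l)).map (fun k => Pi' n l (s - k))).prod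

lemma rel_one {n : ℕ} {x : FreeGroup ℕ} (h : x ∈ braidRels n) :
    PresentedGroup.mk (braidRels n) x = (1 : BraidGroup n) :=
  (QuotientGroup.eq_one_iff _).mpr (Subgroup.subset_normalClosure h)

lemma braid1 {n i : ℕ} (h1 : 1 ≤ i) (h2 : i + 2 ≤ n) :
    sigma n i * sigma n (i+1) * sigma n i = sigma n (i+1) * sigma n i * sigma n (i+1) := by
  have := rel_one (n := n) (x := FreeGroup.of i * FreeGroup.of (i + 1) * FreeGroup.of i *
            (FreeGroup.of (i + 1) * FreeGroup.of i * FreeGroup.of (i + 1))⁻¹)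
    (Or.inl ⟨i, h1, h2, rfl⟩)
  simp only [map_mul, map_inv] at this
  have h := mul_inv_eq_one.mp this
  exact h

lemma braid2 {n i j : ℕ} (h1 : 1 ≤ i) (h2 : i + 2 ≤ j) (h3 : j + 1 ≤ n) :
    Commute (sigma n i) (sigma n j) := by
  have := rel_one (n := n) (x := FreeGroup.of i * FreeGroup.of j *
      (FreeGroup.of j * FreeGroup.of i)⁻¹) (Or.inr (Or.inl ⟨i, j, h1, h2, h3, rfl⟩))
  simp only [map_mul, map_inv] at this
  exact mul_inv_eq_one.mp this

lemma Pi'_of_lt {n l s : ℕ} (h : s < l) : Pi' n l s = 1 := by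
  unfold Pi'
  have : s + 1 - l = 0 := by omega
  simp [this]

lemma Pi'_split {n l m s : ℕ} (h1 : l ≤ m + 1) (h2 : m ≤ s) :
    Pi' n l s = Pi' n l m * Pi' n (m + 1) s := by
  unfold Pi'
  have e1 : l + 1 * (m + 1 - l) = m + 1 := by omega
  have e2 : (m + 1 - l) + (s + 1 - (m + 1)) = s + 1 - l := by omega
  have := List.range'_append (s := l) (m := m + 1 - l) (n := s + 1 - (m + 1)) (step := 1)
  rw [e1, e2] at this
  rw [← this, List.map_append, List.prod_append]

lemma Pi'_concat {n l s : ℕ} (hl : 1 ≤ l) (h : l ≤ s) :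
    Pi' n l s = Pi' n l (s - 1) * sigma n s := by
  rcases Nat.lt_or_ge (s - 1) l with hc | hc
  · rw [Pi'_of_lt hc, one_mul]
    have : s = l := by omega
    subst this
    unfold Pi'
    have : s + 1 - s = 1 := by omega
    simp [this]
  · rw [Pi'_split (m := s - 1) (by omega) (by omega)]
    have h1 : s - 1 + 1 = s := by omega
    rw [h1]
    congr 1
    unfold Pi'
    have : s + 1 - s = 1 := by omega
    simp [this]

lemma sigma_comm_Pi' {n m l s : ℕ}
    (h : ∀ j, l ≤ j → j ≤ s → Commute (sigma n m) (sigma n j)) :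
    Commute (sigma n m) (Pi' n l s) := by
  apply Commute.list_prod_right
  intro x hx
  simp only [List.mem_map, List.mem_range'_1] at hx
  obtain ⟨j, ⟨hj1, hj2⟩, rfl⟩ := hx
  exact h j hj1 (by omega)

lemma sigma_shift {n i : ℕ} (h1 : 1 ≤ i) (h2 : i + 2 ≤ n) :
    Pi' n 1 (n - 1) * sigma n i = sigma n (i + 1) * Pi' n 1 (n - 1) := by
  rw [Pi'_split (n := n) (l := 1) (m := i + 1) (s := n - 1) (by omega) (by omega)]
  have hcomm : Commute (sigma n i) (Pi' n (i + 2) (n - 1)) :=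
    sigma_comm_Pi' (fun j hj1 hj2 => braid2 h1 (by omega) (by omega))
  rw [mul_assoc, ← hcomm.eq, ← mul_assoc]
  have hsplit : Pi' n 1 (i + 1) = Pi' n 1 (i - 1) * sigma n i * sigma n (i + 1) := by
    rw [Pi'_concat (l := 1) (s := i + 1) le_rfl (by omega)]
    congr 1
    have e : i + 1 - 1 = i := by omega
    rw [e, Pi'_concat le_rfl (by omega)]
  rw [hsplit]
  have hb : sigma n i * sigma n (i + 1) * sigma n i
      = sigma n (i + 1) * sigma n i * sigma n (i + 1) := braid1 h1 h2
  have hcomm2 : Commute (sigma n (i + 1)) (Pi' n 1 (i - 1)) :=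
    sigma_comm_Pi' (fun j hj1 hj2 => (braid2 hj1 (by omega) (by omega)).symm)
  set a := Pi' n 1 (i - 1)
  set b := sigma n i
  set c := sigma n (i + 1)
  set P := Pi' n (i + 2) (n - 1)
  have hb' : ∀ x : BraidGroup n, b * (c * (b * x)) = c * (b * (c * x)) := by
    intro x
    simp only [← mul_assoc]
    rw [hb]
  show a * b * c * b * P = c * (a * b * c * P)
  simp only [mul_assoc]
  rw [hb' P, ← mul_assoc, ← hcomm2.eq, mul_assoc]

lemma Pi'_succ {n l s : ℕ} (h : l ≤ s + 1) :
    Pi' n l (s + 1) = Pi' n l s * sigma n (s + 1) := by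
  unfold Pi'
  have e1 : l + 1 * (s + 1 - l) = s + 1 := by omega
  have e2 : (s + 1 - l) + 1 = s + 1 + 1 - l := by omega
  have := List.range'_append (s := l) (m := s + 1 - l) (n := 1) (step := 1)
  rw [e1, e2] at this
  rw [← this, List.map_append, List.prod_append, List.range'_one, List.map_singleton,
    List.prod_singleton]

lemma Pi_shift_Pi' {n l s : ℕ} (hl : 1 ≤ l) (hs : s + 2 ≤ n) :
    Pi' n 1 (n - 1) * Pi' n l s = Pi' n (l + 1) (s + 1) * Pi' n 1 (n - 1) := by
  induction s with
  | zero =>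
      rw [Pi'_of_lt (l := l) (s := 0) (by omega), Pi'_of_lt (l := l + 1) (s := 0 + 1) (by omega),
        mul_one, one_mul]
  | succ s ih =>
      rcases Nat.lt_or_ge (s + 1) l with hc | hc
      · rw [Pi'_of_lt (l := l) (s := s + 1) hc,
          Pi'_of_lt (l := l + 1) (s := s + 1 + 1) (by omega), mul_one, one_mul]
      · rw [Pi'_succ hc, ← mul_assoc, ih (by omega), mul_assoc,
          sigma_shift (by omega) (by omega), ← mul_assoc, ← Pi'_succ (by omega)]

lemma Pi_pow_shift {n : ℕ} (k : ℕ) : ∀ l s : ℕ, 1 ≤ l → s + k + 1 ≤ n →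
    (Pi' n 1 (n - 1)) ^ k * Pi' n l s = Pi' n (l + k) (s + k) * (Pi' n 1 (n - 1)) ^ k := by
  induction k with
  | zero => intro l s _ _; simp
  | succ k ih =>
      intro l s hl hs
      rw [pow_succ, mul_assoc, Pi_shift_Pi' hl (by omega), ← mul_assoc,
        ih (l + 1) (s + 1) (by omega) (by omega)]
      have e1 : l + 1 + k = l + (k + 1) := by omega
      have e2 : s + 1 + k = s + (k + 1) := by omega
      rw [e1, e2, mul_assoc, ← pow_succ]

lemma key {q r : ℕ} (hr : 2 ≤ r) (hrq : r < q) :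
    ∀ k, k ≤ r → ((Pi' q 1 (r - 1))⁻¹) ^ k * (Pi' q 1 (q - 1)) ^ k
      = ((List.range k).map (fun j => Pi' q (r - j) (q - 1 - j))).prod := by
  intro k
  induction k with
  | zero => intro _; simp
  | succ k ih =>
      intro hk
      have hPir : (Pi' q 1 (r - 1))⁻¹ * Pi' q 1 (q - 1) = Pi' q r (q - 1) := by
        have e : r - 1 + 1 = r := by omega
        rw [Pi'_split (m := r - 1) (l := 1) (s := q - 1) (by omega) (by omega), e,
          ← mul_assoc, inv_mul_cancel, one_mul]
      have hstep : Pi' q r (q - 1) * (Pi' q 1 (q - 1)) ^ k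
          = (Pi' q 1 (q - 1)) ^ k * Pi' q (r - k) (q - 1 - k) := by
        have e1 : r - k + k = r := by omega
        have e2 : q - 1 - k + k = q - 1 := by omega
        have := Pi_pow_shift (n := q) k (r - k) (q - 1 - k) (by omega) (by omega)
        rw [e1, e2] at this
        exact this.symm
      calc ((Pi' q 1 (r - 1))⁻¹) ^ (k + 1) * (Pi' q 1 (q - 1)) ^ (k + 1)
          = ((Pi' q 1 (r - 1))⁻¹) ^ k * ((Pi' q 1 (r - 1))⁻¹ * Pi' q 1 (q - 1))
              * (Pi' q 1 (q - 1)) ^ k := by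
            rw [pow_succ, pow_succ']
            simp only [mul_assoc]
        _ = ((Pi' q 1 (r - 1))⁻¹) ^ k * Pi' q r (q - 1) * (Pi' q 1 (q - 1)) ^ k := by
            rw [hPir]
        _ = ((Pi' q 1 (r - 1))⁻¹) ^ k * (Pi' q 1 (q - 1)) ^ k * Pi' q (r - k) (q - 1 - k) := by
            rw [mul_assoc, hstep, ← mul_assoc]
        _ = ((List.range (k + 1)).map (fun j => Pi' q (r - j) (q - 1 - j))).prod := by
            rw [ih (by omega), List.range_succ, List.map_append, List.prod_append,
              List.map_singleton, List.prod_singleton]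

def IsPos (q : ℕ) (g : BraidGroup q) : Prop :=
  ∃ w : List ℕ, (∀ i ∈ w, 1 ≤ i ∧ i < q) ∧ g = (w.map (sigma q)).prod

lemma IsPos.mul {q : ℕ} {g h : BraidGroup q} (hg : IsPos q g) (hh : IsPos q h) :
    IsPos q (g * h) := by
  obtain ⟨w1, hw1, e1⟩ := hg
  obtain ⟨w2, hw2, e2⟩ := hh
  exact ⟨w1 ++ w2, fun i hi => (List.mem_append.mp hi).elim (hw1 i) (hw2 i),
    by rw [e1, e2, List.map_append, List.prod_append]⟩

lemma IsPos.one {q : ℕ} : IsPos q 1 := ⟨[], by simp, by simp⟩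

lemma IsPos.pow {q : ℕ} {g : BraidGroup q} (hg : IsPos q g) (k : ℕ) : IsPos q (g ^ k) := by
  induction k with
  | zero => simpa using IsPos.one
  | succ k ih => rw [pow_succ]; exact ih.mul hg

lemma IsPos.pi' {q l s : ℕ} (hl : 1 ≤ l) (hs : s < q) : IsPos q (Pi' q l s) := by
  refine ⟨List.range' l (s + 1 - l), ?_, rfl⟩
  intro i hi
  rw [List.mem_range'_1] at hi
  omega

lemma IsPos.listProd {q : ℕ} {L : List (BraidGroup q)} (h : ∀ g ∈ L, IsPos q g) :
    IsPos q L.prod := by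
  induction L with
  | nil => simpa using IsPos.one
  | cons a L ih =>
      rw [List.prod_cons]
      exact (h a (List.mem_cons_self (a := a) (l := L))).mul (ih fun g hg => h g (List.mem_cons_of_mem a hg))

theorem stmt6 (q r p : ℕ) (hr : 2 ≤ r) (hrq : r < q) (hp : r ≤ p) :
    ((Pi' q 1 (r - 1))⁻¹) ^ r * (Pi' q 1 (q - 1)) ^ p =
        ((List.range r).map (fun j => Pi' q (r - j) (q - 1 - j))).prod * (Pi' q 1 (q - 1)) ^ (p - r) ∧
      ∃ w : List ℕ, (∀ i ∈ w, 1 ≤ i ∧ i < q) ∧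
        ((Pi' q 1 (r - 1))⁻¹) ^ r * (Pi' q 1 (q - 1)) ^ p = (w.map (sigma q)).prod := by
  have e : (Pi' q 1 (q - 1)) ^ p = (Pi' q 1 (q - 1)) ^ r * (Pi' q 1 (q - 1)) ^ (p - r) := by
    rw [← pow_add]
    congr 1
    omega
  have h1 : ((Pi' q 1 (r - 1))⁻¹) ^ r * (Pi' q 1 (q - 1)) ^ p =
      ((List.range r).map (fun j => Pi' q (r - j) (q - 1 - j))).prod
        * (Pi' q 1 (q - 1)) ^ (p - r) := by
    rw [e, ← mul_assoc, key hr hrq r le_rfl]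
  refine ⟨h1, ?_⟩
  have hpos : IsPos q (((List.range r).map (fun j => Pi' q (r - j) (q - 1 - j))).prod
      * (Pi' q 1 (q - 1)) ^ (p - r)) := by
    refine IsPos.mul (IsPos.listProd ?_) ((IsPos.pi' le_rfl (by omega)).pow _)
    intro g hg
    simp only [List.mem_map, List.mem_range] at hg
    obtain ⟨j, hj, rfl⟩ := hg
    exact IsPos.pi' (by omega) (by omega)
  obtain ⟨w, hw, ew⟩ := hpos
  exact ⟨w, hw, by rw [h1, ew]⟩
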